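/- arXiv:2309.13634 — 11 statements merged into one kernel-verified Lean document; each statement's English description precedes it below -/
import Mathlib

section
/- A set system 𝒞 on a finite set X is a k-weak hierarchy if and only if for every nonempty subset A ⊆ X there exists a subset U ⊆ A with |U| ≤ k such that cl(A) = cl(U), where cl is the closure function of 𝒞. -/
/-- Closure function of a set system: intersection of all members containing `A`
(empty intersection yields the full set). -/
def SetSys.cl {X : Type*} (𝒞 : Set (Set X)) (A : Set X) : Set X :=
  ⋂₀ {C | C ∈ 𝒞 ∧ A ⊆ C}

/-- `𝒞` is a `k`-weak hierarchy: for any `k+1` members, one of them can be dropped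
without changing the total intersection. -/
def SetSys.kWeak {X : Type*} (𝒞 : Set (Set X)) (k : ℕ) : Prop :=
  ∀ A : Fin (k + 1) → Set X, (∀ i, A i ∈ 𝒞) →
    ∃ j, (⋂ i, A i) = ⋂ i ∈ Finset.univ.erase j, A i

lemma SetSys.subset_cl {X : Type*} (𝒞 : Set (Set X)) (A : Set X) : A ⊆ SetSys.cl 𝒞 A := by
  intro a ha
  simp only [SetSys.cl, Set.mem_sInter, Set.mem_setOf_eq]
  rintro C ⟨-, hAC⟩
  exact hAC ha

lemma SetSys.cl_mono {X : Type*} (𝒞 : Set (Set X)) {A B : Set X} (h : A ⊆ B) :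
    SetSys.cl 𝒞 A ⊆ SetSys.cl 𝒞 B := by
  intro x hx
  simp only [SetSys.cl, Set.mem_sInter, Set.mem_setOf_eq] at *
  rintro C ⟨hC, hBC⟩
  exact hx C ⟨hC, h.trans hBC⟩

lemma SetSys.cl_subset_of_mem {X : Type*} {𝒞 : Set (Set X)} {U C : Set X}
    (hC : C ∈ 𝒞) (hUC : U ⊆ C) : SetSys.cl 𝒞 U ⊆ C :=
  Set.sInter_subset_of_mem ⟨hC, hUC⟩

/-- A set system `𝒞` on a finite set `X` is a `k`-weak hierarchy iff for every nonempty
`A ⊆ X` there is `U ⊆ A` with `|U| ≤ k` and `cl(A) = cl(U)`. -/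
theorem stmt0 {X : Type*} [Fintype X] (𝒞 : Set (Set X)) (k : ℕ) :
    SetSys.kWeak 𝒞 k ↔
      ∀ A : Set X, A.Nonempty →
        ∃ U ⊆ A, U.ncard ≤ k ∧ SetSys.cl 𝒞 A = SetSys.cl 𝒞 U := by
  classical
  constructor
  · intro h A _
    have hex : ∃ n, ∃ U : Set X, U ⊆ A ∧ SetSys.cl 𝒞 U = SetSys.cl 𝒞 A ∧ U.ncard = n :=
      ⟨A.ncard, A, subset_rfl, rfl, rfl⟩
    obtain ⟨U, hUA, hclU, hcard⟩ := Nat.find_spec hex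
    have hnk : Nat.find hex ≤ k := by
      by_contra hlt
      push_neg at hlt
      -- pick k+1 distinct elements of U
      have hk1 : k + 1 ≤ U.ncard := by omega
      obtain ⟨V, hVU, hVcard⟩ := Set.exists_subset_card_eq hk1
      obtain ⟨m, f, hf⟩ := (Set.toFinite V).fin_embedding
      have hm : m = k + 1 := by
        have : (Set.range f).ncard = m := by
          rw [← Set.image_univ, Set.ncard_image_of_injective _ f.injective,
            Set.ncard_univ, Nat.card_eq_fintype_card, Fintype.card_fin]
        rw [hf, hVcard] at this
        omega
      subst hm
      set u : Fin (k + 1) → X := fun i => f i with hu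
      have huU : ∀ i, u i ∈ U := fun i => hVU (hf ▸ Set.mem_range_self i)
      have huinj : Function.Injective u := f.injective
      -- for each i, find a witness set C i
      have hC : ∀ i : Fin (k + 1), ∃ C, C ∈ 𝒞 ∧ U \ {u i} ⊆ C ∧ u i ∉ C := by
        intro i
        have hlt' : (U \ {u i}).ncard < Nat.find hex := by
          rw [← hcard]
          exact Set.ncard_diff_singleton_lt_of_mem (huU i) (Set.toFinite U)
        have hne : SetSys.cl 𝒞 (U \ {u i}) ≠ SetSys.cl 𝒞 A := by
          intro heq
          exact Nat.find_min hex hlt' ⟨U \ {u i}, (Set.diff_subset).trans hUA, heq, rfl⟩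
        have hsub : SetSys.cl 𝒞 (U \ {u i}) ⊆ SetSys.cl 𝒞 U :=
          SetSys.cl_mono 𝒞 Set.diff_subset
        have : ∃ x, x ∈ SetSys.cl 𝒞 U ∧ x ∉ SetSys.cl 𝒞 (U \ {u i}) := by
          by_contra hno
          push_neg at hno
          exact hne (le_antisymm hsub (fun x hx => by
            by_contra hxn
            exact hxn ((hclU ▸ hno x) ((hclU.symm) ▸ hx)) ) ▸ hclU)
        obtain ⟨x, hx1, hx2⟩ := this
        simp only [SetSys.cl, Set.mem_sInter, Set.mem_setOf_eq, not_forall] at hx2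
        obtain ⟨C, ⟨hCmem, hCsub⟩, hxC⟩ := hx2
        refine ⟨C, hCmem, hCsub, fun hui => hxC ?_⟩
        have hUC : U ⊆ C := by
          intro y hy
          by_cases hyi : y = u i
          · exact hyi ▸ hui
          · exact hCsub ⟨hy, hyi⟩
        exact SetSys.cl_subset_of_mem hCmem hUC hx1
      choose C hCmem hCsub hCnot using hC
      obtain ⟨j, hj⟩ := h C hCmem
      have hmem : u j ∈ ⋂ i ∈ Finset.univ.erase j, C i := by
        simp only [Set.mem_iInter]
        intro i hi
        exact hCsub i ⟨huU j, fun hcontra => (Finset.mem_erase.mp hi).1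
          (huinj (by simpa using hcontra.symm))⟩
      rw [← hj] at hmem
      exact hCnot j (Set.mem_iInter.mp hmem j)
    exact ⟨U, hUA, by omega, hclU.symm⟩
  · intro h A hAC
    by_contra hcon
    push_neg at hcon
    have hx : ∀ j : Fin (k + 1), ∃ x, (∀ i, i ≠ j → x ∈ A i) ∧ x ∉ A j := by
      intro j
      have hsub : (⋂ i, A i) ⊆ ⋂ i ∈ Finset.univ.erase j, A i := by
        intro x hx
        simp only [Set.mem_iInter] at *
        intro i _
        exact hx i
      have : ∃ x, x ∈ (⋂ i ∈ Finset.univ.erase j, A i) ∧ x ∉ ⋂ i, A i := by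
        by_contra hno
        push_neg at hno
        exact hcon j (le_antisymm hsub fun x hx => hno x hx)
      obtain ⟨x, hx1, hx2⟩ := this
      refine ⟨x, fun i hi => ?_, ?_⟩
      · exact Set.mem_iInter₂.mp hx1 i (Finset.mem_erase.mpr ⟨hi, Finset.mem_univ i⟩)
      · intro hxj
        apply hx2
        rw [Set.mem_iInter]
        intro i
        by_cases hij : i = j
        · exact hij ▸ hxj
        · exact Set.mem_iInter₂.mp hx1 i (Finset.mem_erase.mpr ⟨hij, Finset.mem_univ i⟩)
    choose x hx1 hx2 using hx
    have hxinj : Function.Injective x := by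
      intro i j hij
      by_contra hne
      exact hx2 j (hij ▸ hx1 i j (Ne.symm hne))
    obtain ⟨U, hUS, hUcard, hcl⟩ := h (Set.range x) ⟨x 0, Set.mem_range_self 0⟩
    have hScard : (Set.range x).ncard = k + 1 := by
      rw [← Set.image_univ, Set.ncard_image_of_injective _ hxinj,
        Set.ncard_univ, Nat.card_eq_fintype_card, Fintype.card_fin]
    have : ∃ i, x i ∉ U := by
      by_contra hno
      push_neg at hno
      have : Set.range x ⊆ U := by rintro _ ⟨i, rfl⟩; exact hno i
      have heq := Set.eq_of_subset_of_ncard_le this (by omega) (Set.toFinite U)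
      rw [heq] at hScard
      omega
    obtain ⟨i, hiU⟩ := this
    have hUAi : U ⊆ A i := by
      intro u hu
      obtain ⟨m, rfl⟩ := hUS hu
      have : m ≠ i := fun hmi => hiU (hmi ▸ hu)
      exact hx1 m i (Ne.symm this)
    have : x i ∈ A i := by
      have h1 : x i ∈ SetSys.cl 𝒞 (Set.range x) :=
        SetSys.subset_cl 𝒞 _ (Set.mem_range_self i)
      rw [hcl] at h1
      exact SetSys.cl_subset_of_mem (hAC i) hUAi h1
    exact hx2 i this
end

section
/- If 𝒞 is not a k-weak hierarchy, then there exists a set A ⊆ X with |A| = k+1 such that for every subset U ⊊ A with |U| ≤ k we have cl(U) ≠ cl(A). -/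
/-- If `𝒞` is not a `k`-weak hierarchy, there is `A` with `|A| = k+1` such that no proper
subset `U ⊊ A` with `|U| ≤ k` satisfies `cl(U) = cl(A)`. -/
theorem stmt2 {X : Type*} [Fintype X] (𝒞 : Set (Set X)) (k : ℕ)
    (hwk : ¬ SetSys.kWeak 𝒞 k) :
    ∃ A : Set X, A.ncard = k + 1 ∧
      ∀ U : Set X, U ⊂ A → U.ncard ≤ k → SetSys.cl 𝒞 U ≠ SetSys.cl 𝒞 A := by
  rw [SetSys.kWeak] at hwk
  push_neg at hwk
  obtain ⟨B, hB, hne⟩ := hwk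
  -- For each j, find x j in ⋂_{i≠j} B i but not in B j.
  have hx : ∀ j : Fin (k+1), ∃ x : X, x ∉ B j ∧ ∀ i, i ≠ j → x ∈ B i := by
    intro j
    have hsub : (⋂ i, B i) ⊆ ⋂ i ∈ Finset.univ.erase j, B i := by
      intro x hxx
      simp only [Set.mem_iInter] at *
      intro i _
      exact hxx i
    have : ¬ (⋂ i ∈ Finset.univ.erase j, B i) ⊆ ⋂ i, B i := by
      intro h
      exact hne j (Set.Subset.antisymm hsub h)
    obtain ⟨x, hx1, hx2⟩ := Set.not_subset.mp this
    simp only [Set.mem_iInter, Finset.mem_erase, Finset.mem_univ, and_true] at hx1 hx2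
    push_neg at hx2
    obtain ⟨i, hi⟩ := hx2
    have hij : i = j := by
      by_contra hij
      exact hi (hx1 i hij)
    refine ⟨x, ?_, fun l hl => hx1 l hl⟩
    exact hij ▸ hi
  choose x hx1 hx2 using hx
  have hinj : Function.Injective x := by
    intro i j hij
    by_contra hne'
    exact hx1 j (hij ▸ hx2 i j (Ne.symm hne'))
  refine ⟨Set.range x, ?_, ?_⟩
  · rw [← Set.image_univ, Set.ncard_image_of_injective _ hinj, Set.ncard_univ,
      Nat.card_eq_fintype_card, Fintype.card_fin]
  · intro U hU _ hcl
    obtain ⟨a, haA, haU⟩ := Set.exists_of_ssubset hU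
    obtain ⟨j, rfl⟩ := haA
    -- U ⊆ B j
    have hUB : U ⊆ B j := by
      intro u hu
      obtain ⟨i, rfl⟩ := hU.subset hu
      have hij : i ≠ j := fun h => haU (h ▸ hu)
      exact hx2 i j (Ne.symm hij)
    have h1 : SetSys.cl 𝒞 U ⊆ B j := Set.sInter_subset_of_mem ⟨hB j, hUB⟩
    have h2 : x j ∈ SetSys.cl 𝒞 (Set.range x) := by
      intro C hC
      exact hC.2 ⟨j, rfl⟩
    exact hx1 j (h1 (hcl ▸ h2))
end

section
/- If a DAG G has the lca-property (every nonempty subset A of the leaf set X has a unique least common ancestor), then its clustering system 𝒞_G = {𝒞(v) : v ∈ V(G)} is closed under pairwise intersection: for all u, v ∈ V(G) with 𝒞(u) ∩ 𝒞(v) ≠ ∅, there is w ∈ V(G) with 𝒞(w) = 𝒞(u) ∩ 𝒞(v). -/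
namespace Dag

variable {V : Type*}

/-- Reachability order of a digraph: `v ⪯ w` iff there is a directed path from `w` to `v`. -/
def reach (adj : V → V → Prop) (v w : V) : Prop :=
  Relation.ReflTransGen (fun a b => adj b a) v w

/-- The digraph is acyclic: its reachability relation is antisymmetric. -/
def acyclic (adj : V → V → Prop) : Prop :=
  ∀ v w, reach adj v w → reach adj w v → v = w

/-- A leaf is a `⪯`-minimal vertex. -/
def leaf (adj : V → V → Prop) (x : V) : Prop :=
  ∀ v, reach adj v x → v = x

/-- The set of leaves of the digraph. -/
def leaves (adj : V → V → Prop) : Set V := {x | leaf adj x}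

/-- The cluster of `v`: all leaves that are descendants of `v`. -/
def cluster (adj : V → V → Prop) (v : V) : Set V :=
  {x | leaf adj x ∧ reach adj x v}

/-- The clustering system of the digraph. -/
def clusters (adj : V → V → Prop) : Set (Set V) := {C | ∃ v, C = cluster adj v}

/-- `w` is a least common ancestor of `A`: a `⪯`-minimal common ancestor of `A`. -/
def isLCA (adj : V → V → Prop) (A : Set V) (w : V) : Prop :=
  (∀ a ∈ A, reach adj a w) ∧ ∀ u, (∀ a ∈ A, reach adj a u) → reach adj u w → u = w

/-- `A` has a unique least common ancestor. -/
def hasUniqueLCA (adj : V → V → Prop) (A : Set V) : Prop := ∃! w, isLCA adj A w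

end Dag

/-- If a DAG has the lca-property, then its clustering system is closed under
pairwise nonempty intersection. -/
theorem stmt4 {V : Type*} [Fintype V] (adj : V → V → Prop) (hacy : Dag.acyclic adj)
    (hlca : ∀ A : Set V, A ⊆ Dag.leaves adj → A.Nonempty → Dag.hasUniqueLCA adj A) :
    ∀ u v : V, (Dag.cluster adj u ∩ Dag.cluster adj v).Nonempty →
      ∃ w : V, Dag.cluster adj w = Dag.cluster adj u ∩ Dag.cluster adj v := by
  intro u v hne
  set A := Dag.cluster adj u ∩ Dag.cluster adj v with hA
  have hAleaves : A ⊆ Dag.leaves adj := fun a ha => ha.1.1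
  obtain ⟨w, hw, huniq⟩ := hlca A hAleaves hne
  -- w is below every common ancestor of A
  have key : ∀ t : V, (∀ a ∈ A, Dag.reach adj a t) → Dag.reach adj w t := by
    intro t ht
    -- well-founded strict reach relation
    let r : V → V → Prop := fun a b => Dag.reach adj a b ∧ ¬ Dag.reach adj b a
    have htrans : Transitive r := by
      rintro a b c ⟨hab, hba⟩ ⟨hbc, hcb⟩
      exact ⟨hab.trans hbc, fun hca => hba (hbc.trans hca)⟩
    have hirr : ∀ a, ¬ r a a := fun a h => h.2 h.1
    have hwf : WellFounded r := by
      have : IsTrans V r := ⟨htrans⟩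
      have : IsIrrefl V r := ⟨hirr⟩
      exact Finite.wellFounded_of_trans_of_irrefl r
    -- minimal element of the common ancestors below t
    have hTne : t ∈ {x : V | (∀ a ∈ A, Dag.reach adj a x) ∧ Dag.reach adj x t} :=
      ⟨ht, Relation.ReflTransGen.refl⟩
    obtain ⟨m, ⟨hmanc, hmt⟩, hmin⟩ := hwf.has_min _ ⟨t, hTne⟩
    have hmLCA : Dag.isLCA adj A m := by
      refine ⟨hmanc, fun x hx hxm => ?_⟩
      by_contra hne'
      exact hmin x ⟨hx, hxm.trans hmt⟩ ⟨hxm, fun hmx => hne' (hacy _ _ hxm hmx)⟩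
    have := huniq m hmLCA
    subst this
    exact hmt
  refine ⟨w, Set.Subset.antisymm ?_ ?_⟩
  · rintro x ⟨hxleaf, hxw⟩
    have hxu : Dag.reach adj x u := hxw.trans (key u (fun a ha => ha.1.2))
    have hxv : Dag.reach adj x v := hxw.trans (key v (fun a ha => ha.2.2))
    exact ⟨⟨hxleaf, hxu⟩, ⟨hxleaf, hxv⟩⟩
  · intro a ha
    exact ⟨ha.1.1, hw.1 a ha⟩
end

section
/- Let G be a DAG with leaf set X, A ⊆ X nonempty, and suppose lca(A) is defined. Then 𝒞(lca(A)) is the unique inclusion-minimal cluster in 𝒞_G containing A; that is, for every v ∈ V(G) with A ⊆ 𝒞(v) we have 𝒞(lca(A)) ⊆ 𝒞(v). -/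
/-- If `A ⊆ X` is nonempty and has a unique LCA `w`, then `𝒞(w)` is the unique
inclusion-minimal cluster containing `A`. -/
theorem stmt6 {V : Type*} [Fintype V] (adj : V → V → Prop) (hacy : Dag.acyclic adj)
    (A : Set V) (hAX : A ⊆ Dag.leaves adj) (hne : A.Nonempty)
    (w : V) (hw : Dag.isLCA adj A w) (huniq : ∀ w' : V, Dag.isLCA adj A w' → w' = w) :
    A ⊆ Dag.cluster adj w ∧
      ∀ v : V, A ⊆ Dag.cluster adj v → Dag.cluster adj w ⊆ Dag.cluster adj v := by
  constructor
  · intro a ha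
    exact ⟨hAX ha, hw.1 a ha⟩
  · intro v hv
    -- strict order induced by reach
    set lt : V → V → Prop := fun a b => Dag.reach adj a b ∧ ¬ Dag.reach adj b a with hlt
    have htrans : Transitive lt := by
      intro a b c hab hbc
      refine ⟨hab.1.trans hbc.1, fun h => hab.2 (hbc.1.trans h)⟩
    have hirr : ∀ a, ¬ lt a a := fun a h => h.2 Relation.ReflTransGen.refl
    haveI : IsTrans V lt := ⟨htrans⟩
    haveI : IsIrrefl V lt := ⟨hirr⟩
    have hwf : WellFounded lt := Finite.wellFounded_of_trans_of_irrefl lt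
    -- set of common ancestors of A below v
    set S : Set V := {u | (∀ a ∈ A, Dag.reach adj a u) ∧ Dag.reach adj u v} with hS
    have hvS : v ∈ S := ⟨fun a ha => (hv ha).2, Relation.ReflTransGen.refl⟩
    obtain ⟨u, huS, hmin⟩ := hwf.has_min S ⟨v, hvS⟩
    -- u is an LCA of A
    have hulca : Dag.isLCA adj A u := by
      refine ⟨huS.1, fun u' hu' hru' => ?_⟩
      by_cases h : Dag.reach adj u u'
      · exact hacy u' u hru' h
      · exact absurd ⟨hu', hru'.trans huS.2⟩ (fun h' => hmin u' h' ⟨hru', h⟩)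
    have : u = w := huniq u hulca
    subst this
    intro x hx
    exact ⟨hx.1, hx.2.trans huS.2⟩
end

section
/- Let G be a DAG with leaf set X and the lca-property. Then 𝒞(lca(Y)) = cl(Y) for every nonempty Y ⊆ X, where cl is the closure function of the clustering system 𝒞_G. -/
/-- In a DAG with the lca-property, `𝒞(lca(Y)) = cl(Y)` for every nonempty leaf set `Y`. -/
theorem stmt7 {V : Type*} [Fintype V] (adj : V → V → Prop) (hacy : Dag.acyclic adj)
    (hlca : ∀ A : Set V, A ⊆ Dag.leaves adj → A.Nonempty → Dag.hasUniqueLCA adj A) :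
    ∀ Y : Set V, Y ⊆ Dag.leaves adj → Y.Nonempty →
      ∀ w : V, Dag.isLCA adj Y w →
        Dag.cluster adj w = SetSys.cl (Dag.clusters adj) Y := by
  intro Y hY hYne w hw
  ext x
  constructor
  · -- x ∈ cluster w → x ∈ every C ∈ 𝒞 containing Y
    rintro ⟨hxleaf, hxw⟩
    intro C hC
    obtain ⟨⟨v, rfl⟩, hYC⟩ := hC
    -- v is a common ancestor of Y
    have hvanc : ∀ a ∈ Y, Dag.reach adj a v := fun a ha => (hYC ha).2
    -- find a minimal common ancestor u with reach u v
    set S : Set V := {u | (∀ a ∈ Y, Dag.reach adj a u) ∧ Dag.reach adj u v} with hS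
    have hvS : v ∈ S := ⟨hvanc, Relation.ReflTransGen.refl⟩
    have hwf : WellFounded (fun a b : V => Dag.reach adj a b ∧ a ≠ b) := by
      have : IsTrans V (fun a b : V => Dag.reach adj a b ∧ a ≠ b) := by
        constructor
        rintro a b c ⟨hab, hne1⟩ ⟨hbc, hne2⟩
        refine ⟨hab.trans hbc, fun h => ?_⟩
        subst h
        exact hne2 (hacy b a hbc hab)
      have : IsIrrefl V (fun a b : V => Dag.reach adj a b ∧ a ≠ b) :=
        ⟨fun a h => h.2 rfl⟩
      exact Finite.wellFounded_of_trans_of_irrefl _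
    obtain ⟨u, huS, humin⟩ := hwf.has_min S ⟨v, hvS⟩
    -- u is a minimal common ancestor of Y, hence u = w by uniqueness of lca
    have huLCA : Dag.isLCA adj Y u := by
      refine ⟨huS.1, fun u' hu' huu' => ?_⟩
      have hu'S : u' ∈ S := ⟨hu', huu'.trans huS.2⟩
      by_contra hne
      exact humin u' hu'S ⟨huu', hne⟩
    obtain ⟨w', hw', huniq⟩ := hlca Y hY hYne
    have h1 : u = w' := huniq u huLCA
    have h2 : w = w' := huniq w hw
    have huw : u = w := h1.trans h2.symm
    -- hence w ⪯ v, so x reaches v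
    exact ⟨hxleaf, hxw.trans (huw ▸ huS.2)⟩
  · -- cl(Y) ⊆ cluster w : cluster w is in the system and contains Y
    intro hx
    refine hx (Dag.cluster adj w) ⟨⟨w, rfl⟩, fun y hy => ⟨hY hy, hw.1 y hy⟩⟩
end

section
/- Let G be a DAG with leaf set X and the k-lca-property. Then the map R_G(U) = 𝒞(lca(U)) on nonempty subsets U of X of size at most k is monotone: if W ⊆ R_G(U) with 1 ≤ |W| ≤ k, then R_G(W) ⊆ R_G(U). -/
/-- In a DAG with the `k`-lca-property, the map `U ↦ 𝒞(lca(U))` is monotone. -/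
theorem stmt8 {V : Type*} [Fintype V] (k : ℕ) (adj : V → V → Prop) (hacy : Dag.acyclic adj)
    (hklca : ∀ A : Set V, A ⊆ Dag.leaves adj → A.Nonempty → A.ncard ≤ k →
      Dag.hasUniqueLCA adj A) :
    ∀ U W : Set V, U ⊆ Dag.leaves adj → U.Nonempty → U.ncard ≤ k →
      W.Nonempty → W.ncard ≤ k →
      ∀ wU : V, Dag.isLCA adj U wU → W ⊆ Dag.cluster adj wU →
        ∀ wW : V, Dag.isLCA adj W wW →
          Dag.cluster adj wW ⊆ Dag.cluster adj wU := by
  intro U W hUleaf hUne hUk hWne hWk wU hlcaU hWsub wW hlcaW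
  -- strict reach relation is well-founded on a finite type
  have htrans : Transitive (fun a b => Dag.reach adj a b ∧ a ≠ b) := by
    rintro a b c ⟨hab, hne1⟩ ⟨hbc, hne2⟩
    refine ⟨hab.trans hbc, ?_⟩
    rintro rfl
    exact hne1 (hacy a b hab hbc)
  have hirrefl : ∀ a, ¬ (Dag.reach adj a a ∧ a ≠ a) := by
    rintro a ⟨_, h⟩; exact h rfl
  have hwf : WellFounded (fun a b => Dag.reach adj a b ∧ a ≠ b) := by
    have : IsTrans V (fun a b => Dag.reach adj a b ∧ a ≠ b) := ⟨htrans⟩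
    have : IsIrrefl V (fun a b => Dag.reach adj a b ∧ a ≠ b) := ⟨hirrefl⟩
    exact Finite.wellFounded_of_trans_of_irrefl _
  -- the set of common ancestors of W below wU
  set S : Set V := {u | (∀ a ∈ W, Dag.reach adj a u) ∧ Dag.reach adj u wU} with hS
  have hSne : S.Nonempty := ⟨wU, fun a ha => (hWsub ha).2, Relation.ReflTransGen.refl⟩
  obtain ⟨m, hmS, hmmin⟩ := hwf.has_min S hSne
  have hmlca : Dag.isLCA adj W m := by
    refine ⟨hmS.1, fun u hu hum => ?_⟩
    by_contra hne
    exact hmmin u ⟨hu, hum.trans hmS.2⟩ ⟨hum, hne⟩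
  -- uniqueness of LCA of W
  have hWleaf : W ⊆ Dag.leaves adj := fun x hx => (hWsub hx).1
  obtain ⟨w, _, huniq⟩ := hklca W hWleaf hWne hWk
  have : m = wW := (huniq m hmlca).trans (huniq wW hlcaW).symm
  have hreach : Dag.reach adj wW wU := this ▸ hmS.2
  rintro x ⟨hxleaf, hxr⟩
  exact ⟨hxleaf, hxr.trans hreach⟩
end

section
/- Let G be a DAG with leaf set X and the k-lca-property. Then the clustering system 𝒞_G is pre-k-ary: for every nonempty U ⊆ X with |U| ≤ k, the intersection ⋂{C ∈ 𝒞_G : U ⊆ C} belongs to 𝒞_G. -/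
/-- In a DAG with the `k`-lca-property, the clustering system is pre-`k`-ary. -/
theorem stmt9 {V : Type*} [Fintype V] (k : ℕ) (adj : V → V → Prop) (hacy : Dag.acyclic adj)
    (hklca : ∀ A : Set V, A ⊆ Dag.leaves adj → A.Nonempty → A.ncard ≤ k →
      Dag.hasUniqueLCA adj A) :
    ∀ U : Set V, U ⊆ Dag.leaves adj → U.Nonempty → U.ncard ≤ k →
      (⋂₀ {C | C ∈ Dag.clusters adj ∧ U ⊆ C}) ∈ Dag.clusters adj := by
  classical
  intro U hU hne hcard
  obtain ⟨w, hw, huniq⟩ := hklca U hU hne hcard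
  refine ⟨w, ?_⟩
  apply Set.Subset.antisymm
  · apply Set.sInter_subset_of_mem
    exact ⟨⟨w, rfl⟩, fun a ha => ⟨hU ha, hw.1 a ha⟩⟩
  · intro x hx
    rw [Set.mem_sInter]
    rintro C ⟨⟨v, rfl⟩, hUv⟩
    -- find a minimal common ancestor below v
    letI : Preorder V :=
      { le := Dag.reach adj
        le_refl := fun _ => Relation.ReflTransGen.refl
        le_trans := fun _ _ _ h1 h2 => Relation.ReflTransGen.trans h1 h2 }
    have hwv : Dag.reach adj w v := by
      let s : Finset V := Finset.univ.filter
        (fun u => (∀ a ∈ U, Dag.reach adj a u) ∧ Dag.reach adj u v)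
      have hvs : v ∈ s := by
        simp only [s, Finset.mem_filter, Finset.mem_univ, true_and]
        exact ⟨fun a ha => (hUv ha).2, le_refl v⟩
      obtain ⟨m, hm, hmin⟩ := Finset.exists_minimal (s := s) ⟨v, hvs⟩
      simp only [s, Finset.mem_filter, Finset.mem_univ, true_and] at hm
      have hmw : m = w := by
        refine huniq m ⟨hm.1, fun u hu hum => ?_⟩
        by_contra hne'
        have hus : u ∈ s := by
          simp only [s, Finset.mem_filter, Finset.mem_univ, true_and]
          exact ⟨hu, Relation.ReflTransGen.trans hum hm.2⟩
        exact hne' (hacy u m hum (hmin hus hum))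
      exact hmw ▸ hm.2
    exact ⟨hx.1, Relation.ReflTransGen.trans hx.2 hwv⟩
end

section
/- Let G be a DAG with leaf set X satisfying the path-cluster-comparability property (PCC). Then G has the k-lca-property if and only if 𝒞_G is pre-k-ary. -/
section Aux

variable {V : Type*}

private lemma cluster_mono (adj : V → V → Prop) {u v : V} (h : Dag.reach adj u v) :
    Dag.cluster adj u ⊆ Dag.cluster adj v := fun x hx => ⟨hx.1, hx.2.trans h⟩

/-- Every nonempty subset of a finite type has a `reach`-minimal element. -/
private lemma exists_min [Fintype V] (adj : V → V → Prop) (hacy : Dag.acyclic adj)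
    (S : Set V) (hS : S.Nonempty) :
    ∃ m ∈ S, ∀ x ∈ S, Dag.reach adj x m → x = m := by
  haveI : IsTrans V (fun a b => Dag.reach adj a b ∧ a ≠ b) := by
    constructor
    intro a b c hab hbc
    refine ⟨hab.1.trans hbc.1, ?_⟩
    rintro rfl
    exact hbc.2 (hacy _ _ hbc.1 hab.1)
  haveI : IsIrrefl V (fun a b => Dag.reach adj a b ∧ a ≠ b) := ⟨fun a h => h.2 rfl⟩
  obtain ⟨m, hm, hmin⟩ :=
    (Finite.wellFounded_of_trans_of_irrefl (fun a b => Dag.reach adj a b ∧ a ≠ b)).has_min S hS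
  refine ⟨m, hm, fun x hx hr => ?_⟩
  by_contra hne
  exact hmin x hx ⟨hr, hne⟩

/-- Any common ancestor of `A` has a least common ancestor of `A` below it. -/
private lemma exists_lca_below [Fintype V] (adj : V → V → Prop) (hacy : Dag.acyclic adj)
    (A : Set V) {v : V} (hv : ∀ a ∈ A, Dag.reach adj a v) :
    ∃ m, Dag.isLCA adj A m ∧ Dag.reach adj m v := by
  obtain ⟨m, ⟨hmca, hmv⟩, hmin⟩ := exists_min adj hacy
    {u | (∀ a ∈ A, Dag.reach adj a u) ∧ Dag.reach adj u v}
    ⟨v, hv, Relation.ReflTransGen.refl⟩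
  exact ⟨m, ⟨hmca, fun u hu hum => hmin u ⟨hu, hum.trans hmv⟩ hum⟩, hmv⟩

end Aux

/-- For a DAG satisfying (PCC), the `k`-lca-property holds iff the clustering system is
pre-`k`-ary. -/
theorem stmt10 {V : Type*} [Fintype V] (k : ℕ) (adj : V → V → Prop) (hacy : Dag.acyclic adj)
    (hpcc : ∀ u v : V, (Dag.reach adj u v ∨ Dag.reach adj v u) ↔
      (Dag.cluster adj u ⊆ Dag.cluster adj v ∨ Dag.cluster adj v ⊆ Dag.cluster adj u)) :
    (∀ A : Set V, A ⊆ Dag.leaves adj → A.Nonempty → A.ncard ≤ k →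
        Dag.hasUniqueLCA adj A) ↔
      (∀ U : Set V, U ⊆ Dag.leaves adj → U.Nonempty → U.ncard ≤ k →
        (⋂₀ {C | C ∈ Dag.clusters adj ∧ U ⊆ C}) ∈ Dag.clusters adj) := by
  constructor
  · -- k-lca-property → pre-k-ary
    intro hlca U hUl hUne hUk
    obtain ⟨w, hw, huniq⟩ := hlca U hUl hUne hUk
    have hUw : U ⊆ Dag.cluster adj w := fun a ha => ⟨hUl ha, hw.1 a ha⟩
    refine ⟨w, ?_⟩
    apply subset_antisymm
    · exact Set.sInter_subset_of_mem ⟨⟨w, rfl⟩, hUw⟩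
    · -- cluster w ⊆ every cluster containing U
      intro x hx
      rw [Set.mem_sInter]
      rintro C ⟨⟨v, rfl⟩, hUC⟩
      -- v is a common ancestor of U
      have hvca : ∀ a ∈ U, Dag.reach adj a v := fun a ha => (hUC ha).2
      obtain ⟨m, hm, hmv⟩ := exists_lca_below adj hacy U hvca
      have : m = w := huniq m hm
      subst this
      exact cluster_mono adj hmv hx
  · -- pre-k-ary → k-lca-property
    intro hpre A hAl hAne hAk
    obtain ⟨w, hw⟩ := hpre A hAl hAne hAk
    -- A ⊆ cluster w
    have hAw : A ⊆ Dag.cluster adj w := by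
      rw [← hw]
      intro a ha
      rw [Set.mem_sInter]
      rintro C ⟨-, hAC⟩
      exact hAC ha
    have hwca : ∀ a ∈ A, Dag.reach adj a w := fun a ha => (hAw ha).2
    obtain ⟨m, hm, -⟩ := exists_lca_below adj hacy A hwca
    refine ⟨m, hm, fun w' hw' => ?_⟩
    -- uniqueness: any two LCAs coincide
    have key : ∀ u, Dag.isLCA adj A u →
        u = w ∨ (Dag.reach adj u w ∧ Dag.cluster adj u = Dag.cluster adj w) := by
      intro u hu
      have hclu : Dag.cluster adj w ⊆ Dag.cluster adj u := by
        rw [← hw]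
        exact Set.sInter_subset_of_mem ⟨⟨u, rfl⟩, fun a ha => ⟨hAl ha, hu.1 a ha⟩⟩
      rcases (hpcc w u).2 (Or.inl hclu) with h | h
      · exact Or.inl (hu.2 w hwca h).symm
      · exact Or.inr ⟨h, subset_antisymm (cluster_mono adj h) hclu⟩
    rcases key w' hw' with h1 | h1
    · rcases key m hm with h2 | h2
      · rw [h1, h2]
      · have hmw' : Dag.reach adj m w' := by rw [h1]; exact h2.1
        exact (hw'.2 m hm.1 hmw').symm
    · rcases key m hm with h2 | h2
      · have hw'm : Dag.reach adj w' m := by rw [h2]; exact h1.1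
        exact hm.2 w' hw'.1 hw'm
      · -- both strictly below w with equal clusters
        have hsub : Dag.cluster adj w' ⊆ Dag.cluster adj m := by rw [h1.2, h2.2]
        rcases (hpcc w' m).2 (Or.inl hsub) with h | h
        · exact hm.2 w' hw'.1 h
        · exact (hw'.2 m hm.1 h).symm
end

section
/- Let G be a DAG satisfying (CL): for every v ∈ V(G), lca(𝒞(v)) is defined. Then 𝒞(lca(𝒞(v))) = 𝒞(v) for all v ∈ V(G). -/
/-- If `lca(𝒞(v))` is defined for all `v`, then `𝒞(lca(𝒞(v))) = 𝒞(v)`. -/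
theorem stmt13 {V : Type*} [Fintype V] (adj : V → V → Prop) (hacy : Dag.acyclic adj)
    (hCL : ∀ v : V, Dag.hasUniqueLCA adj (Dag.cluster adj v)) :
    ∀ v w : V, Dag.isLCA adj (Dag.cluster adj v) w →
      Dag.cluster adj w = Dag.cluster adj v := by
  intro v w hw
  -- strict reachability is well-founded
  set r : V → V → Prop := fun a b => Dag.reach adj a b ∧ a ≠ b with hr
  have htrans : Transitive r := by
    intro a b c hab hbc
    refine ⟨hab.1.trans hbc.1, ?_⟩
    rintro rfl
    exact hbc.2 (hacy _ _ hbc.1 hab.1)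
  have hirr : ∀ a, ¬ r a a := fun a h => h.2 rfl
  have hwf : WellFounded r := by
    have : IsTrans V r := ⟨htrans⟩
    have : IsIrrefl V r := ⟨hirr⟩
    exact Finite.wellFounded_of_trans_of_irrefl r
  -- find a minimal common ancestor below v
  set S : Set V := {u | (∀ a ∈ Dag.cluster adj v, Dag.reach adj a u) ∧ Dag.reach adj u v}
    with hS
  have hvS : v ∈ S := ⟨fun a ha => ha.2, Relation.ReflTransGen.refl⟩
  obtain ⟨m, hmS, hmin⟩ := hwf.has_min S ⟨v, hvS⟩
  have hmLCA : Dag.isLCA adj (Dag.cluster adj v) m := by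
    refine ⟨hmS.1, fun u hu hum => ?_⟩
    by_contra hne
    exact hmin u ⟨hu, hum.trans hmS.2⟩ ⟨hum, hne⟩
  obtain ⟨z, _, hz⟩ := hCL v
  have hwm : w = m := (hz w hw).trans (hz m hmLCA).symm
  have hwv : Dag.reach adj w v := hwm ▸ hmS.2
  ext x
  constructor
  · rintro ⟨hx, hxw⟩
    exact ⟨hx, hxw.trans hwv⟩
  · intro hx
    exact ⟨hx.1, hw.1 x hx⟩
end

section
/- A set system 𝒞 on X is closed (i.e., for all nonempty A ⊆ X, A ∈ 𝒞 iff cl(A) = A) if and only if 𝒞 is closed under pairwise nonempty intersection: A, B ∈ 𝒞 and A ∩ B ≠ ∅ imply A ∩ B ∈ 𝒞, assuming 𝒞 contains all singletons and X. -/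
lemma sInter_mem_aux {X : Type*} (𝒞 : Set (Set X))
    (hint : ∀ A B : Set X, A ∈ 𝒞 → B ∈ 𝒞 → (A ∩ B).Nonempty → A ∩ B ∈ 𝒞)
    (A : Set X) (hA : A.Nonempty) :
    ∀ S : Set (Set X), S.Finite → S.Nonempty → S ⊆ 𝒞 → (∀ C ∈ S, A ⊆ C) →
      ⋂₀ S ∈ 𝒞 ∧ A ⊆ ⋂₀ S := by
  intro S hSfin
  refine Set.Finite.induction_on (motive := fun S _ => S.Nonempty → S ⊆ 𝒞 → (∀ C ∈ S, A ⊆ C) →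
      ⋂₀ S ∈ 𝒞 ∧ A ⊆ ⋂₀ S) S hSfin ?_ ?_
  · intro h; exact absurd rfl h.ne_empty
  · intro C S hCS hSfin ih
    intro _ hsub hcont
    rcases S.eq_empty_or_nonempty with rfl | hSne
    · simp only [Set.sInter_insert, Set.sInter_empty, Set.inter_univ]
      exact ⟨hsub (Set.mem_insert _ _), hcont C (Set.mem_insert _ _)⟩
    · obtain ⟨hmem, hAsub⟩ := ih hSne (fun x hx => hsub (Set.mem_insert_of_mem _ hx))
        (fun D hD => hcont D (Set.mem_insert_of_mem _ hD))
      have hC : C ∈ 𝒞 := hsub (Set.mem_insert _ _)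
      have hAC : A ⊆ C := hcont C (Set.mem_insert _ _)
      have hsub2 : A ⊆ C ∩ ⋂₀ S := Set.subset_inter hAC hAsub
      have : C ∩ ⋂₀ S ∈ 𝒞 := hint C (⋂₀ S) hC hmem (hA.mono hsub2)
      rw [Set.sInter_insert]
      exact ⟨this, hsub2⟩

/-- A clustering system is closed iff it is closed under pairwise nonempty intersection. -/
theorem stmt18 {X : Type*} [Fintype X] (𝒞 : Set (Set X))
    (hne : ∀ C ∈ 𝒞, C.Nonempty) (huniv : Set.univ ∈ 𝒞) (hsing : ∀ x : X, {x} ∈ 𝒞) :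
    (∀ A : Set X, A.Nonempty → (A ∈ 𝒞 ↔ SetSys.cl 𝒞 A = A)) ↔
      (∀ A B : Set X, A ∈ 𝒞 → B ∈ 𝒞 → (A ∩ B).Nonempty → A ∩ B ∈ 𝒞) := by
  constructor
  · intro hclosed A B hA hB hABne
    rw [hclosed _ hABne]
    apply Set.Subset.antisymm
    · apply Set.subset_inter
      · exact Set.sInter_subset_of_mem ⟨hA, Set.inter_subset_left⟩
      · exact Set.sInter_subset_of_mem ⟨hB, Set.inter_subset_right⟩
    · exact fun x hx C hC => hC.2 hx
  · intro hint A hAne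
    constructor
    · intro hA
      apply Set.Subset.antisymm
      · exact Set.sInter_subset_of_mem ⟨hA, Set.Subset.rfl⟩
      · exact fun x hx C hC => hC.2 hx
    · intro hcl
      rw [← hcl]
      have := sInter_mem_aux 𝒞 hint A hAne {C | C ∈ 𝒞 ∧ A ⊆ C}
        (Set.toFinite _) ⟨Set.univ, huniv, Set.subset_univ _⟩
        (fun C hC => hC.1) (fun C hC => hC.2)
      exact this.1
end

section
/- Let 𝒞 be a pre-k-ary clustering system on X. Then there exists a DAG G (namely the Hasse diagram of 𝒞) with 𝒞_G = 𝒞 that has the k-lca-property. -/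
/-- Every pre-`k`-ary clustering system `𝒞` is the clustering system of some DAG
(namely its Hasse diagram) with the `k`-lca-property; the leaves of the DAG are
identified with `X` via an injection `φ`. -/
theorem stmt19 {X : Type} [Fintype X] (k : ℕ) (𝒞 : Set (Set X))
    (hne : ∀ C ∈ 𝒞, C.Nonempty) (huniv : Set.univ ∈ 𝒞) (hsing : ∀ x : X, {x} ∈ 𝒞)
    (hpre : ∀ U : Set X, U.Nonempty → U.ncard ≤ k → (⋂₀ {C | C ∈ 𝒞 ∧ U ⊆ C}) ∈ 𝒞) :
    ∃ (V : Type) (_ : Fintype V) (adj : V → V → Prop) (φ : X → V),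
      Dag.acyclic adj ∧ Function.Injective φ ∧
      (∀ x : X, φ x ∈ Dag.leaves adj) ∧
      (∀ v ∈ Dag.leaves adj, ∃ x : X, φ x = v) ∧
      (∀ v : V, ∃ C ∈ 𝒞, Dag.cluster adj v = φ '' C) ∧
      (∀ C ∈ 𝒞, ∃ v : V, Dag.cluster adj v = φ '' C) ∧
      (∀ A : Set X, A.Nonempty → A.ncard ≤ k → Dag.hasUniqueLCA adj (φ '' A)) := by
  classical
  let V := {C : Set X // C ∈ 𝒞}
  have : Finite (Set X) := inferInstance
  let adj : V → V → Prop := fun A B => B.1 ⊂ A.1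
  let φ : X → V := fun x => ⟨{x}, hsing x⟩
  have reach_iff : ∀ v w : V, Dag.reach adj v w ↔ v.1 ⊆ w.1 := by
    intro v w
    constructor
    · intro h
      induction h with
      | refl => exact subset_refl _
      | tail _ hab ih => exact ih.trans hab.le
    · intro h
      rcases eq_or_ne v w with rfl | hne'
      · exact Relation.ReflTransGen.refl
      · exact Relation.ReflTransGen.single (h.ssubset_of_ne (fun he => hne' (Subtype.ext he)))
  have hleaf : ∀ x : X, Dag.leaf adj (φ x) := by
    intro x v hv
    rw [reach_iff] at hv
    have hvne := hne v.1 v.2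
    apply Subtype.ext
    exact Set.Nonempty.subset_singleton_iff hvne |>.mp hv
  have hcluster : ∀ v : V, Dag.cluster adj v = φ '' v.1 := by
    intro v
    ext u
    constructor
    · rintro ⟨hl, hr⟩
      rcases hne u.1 u.2 with ⟨a, ha⟩
      have : φ a = u := by
        apply hl
        rw [reach_iff]
        exact Set.singleton_subset_iff.mpr ha
      exact ⟨a, ((reach_iff u v).mp hr) ha, this⟩
    · rintro ⟨a, ha, rfl⟩
      exact ⟨hleaf a, (reach_iff _ _).mpr (Set.singleton_subset_iff.mpr ha)⟩
  refine ⟨V, Fintype.ofFinite V, adj, φ, ?_, ?_, ?_, ?_, ?_, ?_, ?_⟩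
  · intro v w hvw hwv
    exact Subtype.ext (subset_antisymm ((reach_iff v w).mp hvw) ((reach_iff w v).mp hwv))
  · intro a b hab
    have : ({a} : Set X) = {b} := congrArg Subtype.val hab
    exact Set.singleton_eq_singleton_iff.mp this
  · exact hleaf
  · intro v hv
    rcases hne v.1 v.2 with ⟨a, ha⟩
    exact ⟨a, hv (φ a) ((reach_iff _ _).mpr (Set.singleton_subset_iff.mpr ha))⟩
  · intro v
    exact ⟨v.1, v.2, hcluster v⟩
  · intro C hC
    exact ⟨⟨C, hC⟩, hcluster _⟩
  · intro A hA hk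
    set I : Set X := ⋂₀ {C | C ∈ 𝒞 ∧ A ⊆ C} with hIdef
    have hI : I ∈ 𝒞 := hpre A hA hk
    have hAI : A ⊆ I := by
      intro a ha
      exact Set.mem_sInter.mpr (fun C hC => hC.2 ha)
    have hIleast : ∀ C, C ∈ 𝒞 → A ⊆ C → I ⊆ C := by
      intro C hC hAC
      exact Set.sInter_subset_of_mem ⟨hC, hAC⟩
    refine ⟨⟨I, hI⟩, ⟨?_, ?_⟩, ?_⟩
    · rintro a ⟨x, hx, rfl⟩
      exact (reach_iff _ _).mpr (Set.singleton_subset_iff.mpr (hAI hx))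
    · intro u hu hur
      have hAu : A ⊆ u.1 := by
        intro x hx
        exact Set.singleton_subset_iff.mp ((reach_iff _ _).mp (hu (φ x) ⟨x, hx, rfl⟩))
      have h1 : I ⊆ u.1 := hIleast u.1 u.2 hAu
      have h2 : u.1 ⊆ I := (reach_iff _ _).mp hur
      exact Subtype.ext (subset_antisymm h2 h1)
    · intro y hy
      have hAy : A ⊆ y.1 := by
        intro x hx
        exact Set.singleton_subset_iff.mp ((reach_iff _ _).mp (hy.1 (φ x) ⟨x, hx, rfl⟩))
      have hIy : Dag.reach adj ⟨I, hI⟩ y := (reach_iff _ _).mpr (hIleast y.1 y.2 hAy)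
      exact (hy.2 ⟨I, hI⟩ (fun a ha => by
        rcases ha with ⟨x, hx, rfl⟩
        exact (reach_iff _ _).mpr (Set.singleton_subset_iff.mpr (hAI hx))) hIy).symm
end
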